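/- Let T > 0, α ∈ (1/2, 1], and let O : [0, T] → ℝ and X : [0, T] → ℝ^d be α-Hölder continuous. Then for every ε > 0 there exists δ > 0 such that for every partition 0 = t₀ < t₁ < ⋯ < t_m = T with mesh less than δ, ‖∑_{i=1}^m [e^{−O(t_{i−1})}(X(t_i) − X(t_{i−1})) − X(t_{i−1}) e^{−O(t_{i−1})}(O(t_i) − O(t_{i−1}))] − (e^{−O(T)} X(T) − e^{−O(0)} X(0))‖ < ε. -/

import Mathlib

open Real

lemma fin_telescope {E : Type*} [AddCommGroup E] : ∀ (m : ℕ) (g : Fin (m+1) → E),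
    ∑ i : Fin m, (g i.succ - g i.castSucc) = g (Fin.last m) - g 0 := by
  intro m
  induction m with
  | zero => intro g; simp
  | succ n ih =>
    intro g
    rw [Fin.sum_univ_castSucc]
    have h := ih (fun j => g j.castSucc)
    simp only [Fin.succ_castSucc] at h ⊢
    rw [h, Fin.succ_last]
    simp only [Fin.castSucc_zero]
    abel

theorem stmt_7 {d : ℕ} (T : ℝ) (hT : 0 < T) (α : ℝ) (hα : α ∈ Set.Ioc (1/2 : ℝ) 1)
    (O : ℝ → ℝ) (X : ℝ → EuclideanSpace ℝ (Fin d))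
    (hO : ∃ C > 0, ∀ s ∈ Set.Icc (0:ℝ) T, ∀ t ∈ Set.Icc (0:ℝ) T,
      |O t - O s| ≤ C * |t - s| ^ α)
    (hX : ∃ C > 0, ∀ s ∈ Set.Icc (0:ℝ) T, ∀ t ∈ Set.Icc (0:ℝ) T,
      ‖X t - X s‖ ≤ C * |t - s| ^ α) :
    ∀ ε > 0, ∃ δ > 0, ∀ (m : ℕ) (t : Fin (m + 1) → ℝ), StrictMono t →
      t 0 = 0 → t (Fin.last m) = T →
      (∀ i : Fin m, t i.succ - t i.castSucc < δ) →
      ‖(∑ i : Fin m,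
          (Real.exp (-O (t i.castSucc)) • (X (t i.succ) - X (t i.castSucc)) -
            (Real.exp (-O (t i.castSucc)) * (O (t i.succ) - O (t i.castSucc))) •
              X (t i.castSucc)))
        - (Real.exp (-O T) • X T - Real.exp (-O 0) • X 0)‖ < ε := by
  obtain ⟨hα1, hα2⟩ := hα
  obtain ⟨CO, hCO, hO⟩ := hO
  obtain ⟨CX, hCX, hX⟩ := hX
  intro ε hε
  have hαpos : (0:ℝ) < α := by linarith
  have hβ : (0:ℝ) < 2*α - 1 := by linarith
  set MO : ℝ := |O 0| + CO * T ^ α with hMOdef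
  set MX : ℝ := ‖X 0‖ + CX * T ^ α with hMXdef
  have hTα : (0:ℝ) < T ^ α := Real.rpow_pos_of_pos hT α
  have hMX : 0 < MX := by positivity
  set K : ℝ := Real.exp MO * (CO^2 * MX + CO * CX) with hKdef
  have hKpos : 0 < K := by positivity
  set δ : ℝ := min 1 (min (CO⁻¹ ^ (α⁻¹)) ((ε/(K*T+1)) ^ ((2*α-1)⁻¹))) with hδdef
  have hδpos : 0 < δ := by
    refine lt_min one_pos (lt_min ?_ ?_) <;> exact Real.rpow_pos_of_pos (by positivity) _
  have hδα : δ ^ α ≤ CO⁻¹ := by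
    have h1 : δ ≤ CO⁻¹ ^ (α⁻¹) := le_trans (min_le_right _ _) (min_le_left _ _)
    calc δ ^ α ≤ (CO⁻¹ ^ (α⁻¹)) ^ α := Real.rpow_le_rpow hδpos.le h1 hαpos.le
      _ = CO⁻¹ := by
          rw [← Real.rpow_mul (by positivity), inv_mul_cancel₀ hαpos.ne', Real.rpow_one]
  have hδβ : δ ^ (2*α-1) ≤ ε/(K*T+1) := by
    have h1 : δ ≤ (ε/(K*T+1)) ^ ((2*α-1)⁻¹) := le_trans (min_le_right _ _) (min_le_right _ _)
    calc δ ^ (2*α-1) ≤ ((ε/(K*T+1)) ^ ((2*α-1)⁻¹)) ^ (2*α-1) :=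
          Real.rpow_le_rpow hδpos.le h1 hβ.le
      _ = ε/(K*T+1) := by
          rw [← Real.rpow_mul (by positivity), inv_mul_cancel₀ hβ.ne', Real.rpow_one]
  refine ⟨δ, hδpos, ?_⟩
  intro m t ht ht0 htT hmesh
  have hmem : ∀ j : Fin (m+1), t j ∈ Set.Icc (0:ℝ) T := by
    intro j
    exact ⟨ht0 ▸ ht.monotone (Fin.zero_le j), htT ▸ ht.monotone (Fin.le_last j)⟩
  -- bounds on O and X on [0,T]
  have hObd : ∀ v ∈ Set.Icc (0:ℝ) T, Real.exp (-O v) ≤ Real.exp MO := by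
    intro v hv
    apply Real.exp_le_exp.mpr
    have h1 := hO 0 ⟨le_refl 0, hT.le⟩ v hv
    have h2 : |v - 0| ^ α ≤ T ^ α := by
      rw [sub_zero, abs_of_nonneg hv.1]
      exact Real.rpow_le_rpow hv.1 hv.2 hαpos.le
    have h3 : |O v - O 0| ≤ CO * T ^ α := by
      refine le_trans h1 ?_
      exact mul_le_mul_of_nonneg_left h2 hCO.le
    have := abs_le.mp h3
    have := abs_le.mp (le_refl |O 0|)
    simp only [hMOdef]
    have h4 : -O v ≤ -(O 0) + CO * T ^ α := by linarith [this.1]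
    linarith [neg_abs_le (O 0), le_abs_self (O 0)]
  have hXbd : ∀ v ∈ Set.Icc (0:ℝ) T, ‖X v‖ ≤ MX := by
    intro v hv
    have h1 := hX 0 ⟨le_refl 0, hT.le⟩ v hv
    have h2 : |v - 0| ^ α ≤ T ^ α := by
      rw [sub_zero, abs_of_nonneg hv.1]
      exact Real.rpow_le_rpow hv.1 hv.2 hαpos.le
    calc ‖X v‖ = ‖X 0 + (X v - X 0)‖ := by rw [show X 0 + (X v - X 0) = X v by abel]
      _ ≤ ‖X 0‖ + ‖X v - X 0‖ := norm_add_le _ _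
      _ ≤ ‖X 0‖ + CX * T ^ α := by
          have := mul_le_mul_of_nonneg_left h2 hCX.le
          linarith [h1]
  -- per-term bound
  have key : ∀ i : Fin m,
      ‖(Real.exp (-O (t i.castSucc)) • (X (t i.succ) - X (t i.castSucc)) -
          (Real.exp (-O (t i.castSucc)) * (O (t i.succ) - O (t i.castSucc))) •
            X (t i.castSucc))
        - (Real.exp (-O (t i.succ)) • X (t i.succ) -
            Real.exp (-O (t i.castSucc)) • X (t i.castSucc))‖
      ≤ K * δ ^ (2*α-1) * (t i.succ - t i.castSucc) := by
    intro i
    set s := t i.castSucc with hs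
    set u := t i.succ with hu
    have hsu : s < u := ht Fin.castSucc_lt_succ
    have hsm := hmem i.castSucc
    have hum := hmem i.succ
    have hΔpos : (0:ℝ) < u - s := by linarith
    have hΔδ : u - s < δ := hmesh i
    set h : ℝ := O u - O s with hh
    have hhb : |h| ≤ CO * (u - s) ^ α := by
      have := hO s hsm u hum
      rwa [abs_of_pos hΔpos] at this
    have hΔα : (u - s) ^ α ≤ δ ^ α := Real.rpow_le_rpow hΔpos.le hΔδ.le hαpos.le
    have hh1 : |h| ≤ 1 := by
      calc |h| ≤ CO * (u - s) ^ α := hhb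
        _ ≤ CO * δ ^ α := mul_le_mul_of_nonneg_left hΔα hCO.le
        _ ≤ CO * CO⁻¹ := mul_le_mul_of_nonneg_left hδα hCO.le
        _ = 1 := mul_inv_cancel₀ hCO.ne'
    have hXu : ‖X u‖ ≤ MX := hXbd u hum
    have hXus : ‖X u - X s‖ ≤ CX * (u - s) ^ α := by
      have := hX s hsm u hum
      rwa [abs_of_pos hΔpos] at this
    have hEs : Real.exp (-O s) ≤ Real.exp MO := hObd s hsm
    -- algebraic identity
    have hid : (Real.exp (-O s) • (X u - X s) -
          (Real.exp (-O s) * h) • X s)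
        - (Real.exp (-O u) • X u - Real.exp (-O s) • X s)
        = (Real.exp (-O s) - Real.exp (-O u) - Real.exp (-O s) * h) • X u
          + (Real.exp (-O s) * h) • (X u - X s) := by
      module
    rw [hid]
    have hc1 : |Real.exp (-O s) - Real.exp (-O u) - Real.exp (-O s) * h|
        ≤ Real.exp MO * h ^ 2 := by
      have hexpu : Real.exp (-O u) = Real.exp (-O s) * Real.exp (-h) := by
        rw [← Real.exp_add, hh]; ring_nf
      have heq : Real.exp (-O s) - Real.exp (-O u) - Real.exp (-O s) * h
          = -(Real.exp (-O s) * (Real.exp (-h) - 1 - (-h))) := by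
        rw [hexpu]; ring
      rw [heq, abs_neg, abs_mul, abs_of_pos (Real.exp_pos _)]
      have habs : |Real.exp (-h) - 1 - (-h)| ≤ (-h) ^ 2 :=
        Real.abs_exp_sub_one_sub_id_le (by rwa [abs_neg])
      have : (-h) ^ 2 = h ^ 2 := by ring
      rw [this] at habs
      exact mul_le_mul hEs habs (abs_nonneg _) (Real.exp_pos _).le
    have hc2 : |Real.exp (-O s) * h| ≤ Real.exp MO * |h| := by
      rw [abs_mul, abs_of_pos (Real.exp_pos _)]
      exact mul_le_mul_of_nonneg_right hEs (abs_nonneg _)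
    have hh2 : h ^ 2 ≤ (CO * (u - s) ^ α) ^ 2 := by
      rw [← sq_abs]
      exact pow_le_pow_left₀ (abs_nonneg _) hhb 2
    have step1 : ‖(Real.exp (-O s) - Real.exp (-O u) - Real.exp (-O s) * h) • X u
          + (Real.exp (-O s) * h) • (X u - X s)‖
        ≤ Real.exp MO * h ^ 2 * MX + Real.exp MO * |h| * (CX * (u - s) ^ α) := by
      calc ‖_ + _‖ ≤ ‖(Real.exp (-O s) - Real.exp (-O u) - Real.exp (-O s) * h) • X u‖
            + ‖(Real.exp (-O s) * h) • (X u - X s)‖ := norm_add_le _ _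
        _ = |Real.exp (-O s) - Real.exp (-O u) - Real.exp (-O s) * h| * ‖X u‖
            + |Real.exp (-O s) * h| * ‖X u - X s‖ := by
            rw [norm_smul, norm_smul, Real.norm_eq_abs, Real.norm_eq_abs]
        _ ≤ Real.exp MO * h ^ 2 * MX + Real.exp MO * |h| * (CX * (u - s) ^ α) := by
            have t1 := mul_le_mul hc1 hXu (norm_nonneg _) (by positivity)
            have t2 := mul_le_mul hc2 hXus (norm_nonneg _) (by positivity)
            linarith
    refine le_trans step1 ?_
    have hrsq : (u - s) ^ α * (u - s) ^ α = (u - s) ^ (2*α-1) * (u - s) := by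
      rw [← Real.rpow_add hΔpos]
      have : α + α = (2*α - 1) + 1 := by ring
      rw [this, Real.rpow_add hΔpos, Real.rpow_one]
    have hstep2 : Real.exp MO * h ^ 2 * MX + Real.exp MO * |h| * (CX * (u - s) ^ α)
        ≤ K * ((u - s) ^ α * (u - s) ^ α) := by
      have hΔαpos : (0:ℝ) < (u - s) ^ α := Real.rpow_pos_of_pos hΔpos α
      have hh2' : h ^ 2 ≤ CO^2 * ((u-s)^α * (u-s)^α) := by
        calc h ^ 2 ≤ (CO * (u - s) ^ α) ^ 2 := hh2
          _ = CO^2 * ((u-s)^α * (u-s)^α) := by ring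
      have e1 : Real.exp MO * h ^ 2 * MX ≤ Real.exp MO * (CO^2 * MX) * ((u - s)^α * (u-s)^α) := by
        calc Real.exp MO * h ^ 2 * MX
            ≤ Real.exp MO * (CO^2 * ((u-s)^α * (u-s)^α)) * MX :=
              mul_le_mul_of_nonneg_right
                (mul_le_mul_of_nonneg_left hh2' (Real.exp_pos MO).le) hMX.le
          _ = Real.exp MO * (CO^2 * MX) * ((u - s)^α * (u-s)^α) := by ring
      have e2 : Real.exp MO * |h| * (CX * (u - s) ^ α)
          ≤ Real.exp MO * (CO * CX) * ((u - s)^α * (u-s)^α) := by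
        calc Real.exp MO * |h| * (CX * (u - s) ^ α)
            ≤ Real.exp MO * (CO * (u-s)^α) * (CX * (u - s) ^ α) :=
              mul_le_mul_of_nonneg_right
                (mul_le_mul_of_nonneg_left hhb (Real.exp_pos MO).le) (by positivity)
          _ = Real.exp MO * (CO * CX) * ((u - s)^α * (u-s)^α) := by ring
      have efin : Real.exp MO * (CO^2 * MX) * ((u - s)^α * (u-s)^α)
          + Real.exp MO * (CO * CX) * ((u - s)^α * (u-s)^α)
          = K * ((u - s) ^ α * (u - s) ^ α) := by rw [hKdef]; ring
      linarith
    refine le_trans hstep2 ?_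
    rw [hrsq]
    have hΔβ : (u - s) ^ (2*α-1) ≤ δ ^ (2*α-1) :=
      Real.rpow_le_rpow hΔpos.le hΔδ.le hβ.le
    calc K * ((u - s) ^ (2*α-1) * (u - s)) = K * (u - s) ^ (2*α-1) * (u - s) := by ring
      _ ≤ K * δ ^ (2*α-1) * (u - s) := by
          apply mul_le_mul_of_nonneg_right _ hΔpos.le
          exact mul_le_mul_of_nonneg_left hΔβ hKpos.le
  -- telescoping
  have hD : ∑ i : Fin m, (Real.exp (-O (t i.succ)) • X (t i.succ)
        - Real.exp (-O (t i.castSucc)) • X (t i.castSucc))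
      = Real.exp (-O T) • X T - Real.exp (-O 0) • X 0 := by
    have := fin_telescope m (fun j => Real.exp (-O (t j)) • X (t j))
    rw [this, ht0, htT]
  have hsumΔ : ∑ i : Fin m, (t i.succ - t i.castSucc) = T := by
    rw [fin_telescope m t, ht0, htT, sub_zero]
  have hrw : (∑ i : Fin m,
        (Real.exp (-O (t i.castSucc)) • (X (t i.succ) - X (t i.castSucc)) -
          (Real.exp (-O (t i.castSucc)) * (O (t i.succ) - O (t i.castSucc))) •
            X (t i.castSucc)))
      - (Real.exp (-O T) • X T - Real.exp (-O 0) • X 0)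
      = ∑ i : Fin m,
        ((Real.exp (-O (t i.castSucc)) • (X (t i.succ) - X (t i.castSucc)) -
          (Real.exp (-O (t i.castSucc)) * (O (t i.succ) - O (t i.castSucc))) •
            X (t i.castSucc))
        - (Real.exp (-O (t i.succ)) • X (t i.succ) -
            Real.exp (-O (t i.castSucc)) • X (t i.castSucc))) := by
    rw [← hD]
    exact (Finset.sum_sub_distrib _ _).symm
  rw [hrw]
  refine lt_of_le_of_lt ((norm_sum_le _ _).trans (Finset.sum_le_sum fun i _ => key i)) ?_
  rw [← Finset.mul_sum, hsumΔ]
  have h1 : (0:ℝ) < K*T+1 := by positivity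
  have h2 : K * δ ^ (2*α-1) * T ≤ K * (ε/(K*T+1)) * T :=
    mul_le_mul_of_nonneg_right (mul_le_mul_of_nonneg_left hδβ hKpos.le) hT.le
  have h3 : K * (ε/(K*T+1)) * T = (K*T/(K*T+1)) * ε := by ring
  have h4 : K*T/(K*T+1) < 1 := by rw [div_lt_one h1]; linarith
  nlinarith [h2, h3, h4, hε]
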